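/- For every finite set S of n points in the plane and every natural number F with F < ⌈n/2⌉, there exists a point K such that: for every subset N ⊆ S with |S \ N| ≤ F, every point c and real ρ with dist(p, c) ≤ ρ for all p ∈ N, and every p ∈ N, one has dist(p, K) ≤ 2·√2·ρ. (Hence sending all robots straight to K gathers every possible reliable subset N within at most 2√2 times its optimal gathering time, i.e., the move-to-intersection algorithm has competitive ratio at most 2√2 when fewer than ⌈n/2⌉ robots are byzantine.) -/

import Mathlib

open scoped Classical

lemma exists_median {α : Type*} (S : Finset α) (f : α → ℝ) (m : ℕ)
    (hm : 1 ≤ m) (hmn : m ≤ S.card) (h2m : 2 * m ≤ S.card + 1) :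
    ∃ t : ℝ, m ≤ (S.filter (fun p => f p ≤ t)).card ∧
      m ≤ (S.filter (fun p => t ≤ f p)).card := by
  have hSne : S.Nonempty := Finset.card_pos.mp (lt_of_lt_of_le hm hmn)
  have himg : (S.image f).Nonempty := hSne.image f
  set T := (S.image f).filter (fun t => m ≤ (S.filter (fun p => f p ≤ t)).card) with hT
  have hTne : T.Nonempty := by
    refine ⟨(S.image f).max' himg, Finset.mem_filter.mpr ⟨(S.image f).max'_mem himg, ?_⟩⟩
    have : S.filter (fun p => f p ≤ (S.image f).max' himg) = S := by
      apply Finset.filter_true_of_mem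
      intro p hp
      exact Finset.le_max' _ _ (Finset.mem_image_of_mem f hp)
    rw [this]; exact hmn
  set t := T.min' hTne with ht
  have htT : t ∈ T := T.min'_mem hTne
  have hleft : m ≤ (S.filter (fun p => f p ≤ t)).card := (Finset.mem_filter.mp htT).2
  refine ⟨t, hleft, ?_⟩
  have hlt : (S.filter (fun p => f p < t)).card < m := by
    by_contra h
    push_neg at h
    have hne : (S.filter (fun p => f p < t)).Nonempty :=
      Finset.card_pos.mp (lt_of_lt_of_le hm h)
    have himg2 : ((S.filter (fun p => f p < t)).image f).Nonempty := hne.image f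
    set t' := ((S.filter (fun p => f p < t)).image f).max' himg2 with ht'
    obtain ⟨p0, hp0, hp0e⟩ := Finset.mem_image.mp (Finset.max'_mem _ himg2)
    have ht'lt : t' < t := by
      calc t' = f p0 := hp0e.symm
        _ < t := (Finset.mem_filter.mp hp0).2
    have ht'mem : t' ∈ S.image f :=
      Finset.mem_image.mpr ⟨p0, (Finset.mem_filter.mp hp0).1, hp0e⟩
    have hsub : S.filter (fun p => f p < t) ⊆ S.filter (fun p => f p ≤ t') := by
      intro p hp
      rw [Finset.mem_filter] at hp ⊢
      exact ⟨hp.1, Finset.le_max' _ _ (Finset.mem_image.mpr ⟨p, Finset.mem_filter.mpr hp, rfl⟩)⟩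
    have ht'T : t' ∈ T :=
      Finset.mem_filter.mpr ⟨ht'mem, le_trans h (Finset.card_le_card hsub)⟩
    exact absurd (T.min'_le _ ht'T) (not_le.mpr ht'lt)
  have hcompl : S.filter (fun p => t ≤ f p) = S \ S.filter (fun p => f p < t) := by
    ext p
    simp only [Finset.mem_filter, Finset.mem_sdiff, not_and, not_lt]
    constructor
    · rintro ⟨hp, h⟩; exact ⟨hp, fun _ => h⟩
    · rintro ⟨hp, h⟩; exact ⟨hp, h hp⟩
  rw [hcompl, Finset.card_sdiff_of_subset (Finset.filter_subset _ _)]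
  omega

/-- Coordinate distance is at most the Euclidean distance. -/
lemma coord_dist_le (x y : EuclideanSpace ℝ (Fin 2)) (i : Fin 2) :
    |x i - y i| ≤ dist x y := by
  rw [EuclideanSpace.dist_eq]
  apply Real.le_sqrt_of_sq_le
  rw [sq_abs]
  have := Finset.single_le_sum (f := fun j => dist (x j) (y j) ^ 2)
    (fun j _ => sq_nonneg _) (Finset.mem_univ i)
  calc (x i - y i) ^ 2 = dist (x i) (y i) ^ 2 := by rw [Real.dist_eq, sq_abs]
    _ ≤ _ := this

/-- Move-to-intersection: for any finite set `S` of points in the plane and any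
`F < ⌈n/2⌉`, there is a point `K` such that for every subset `N ⊆ S` omitting at
most `F` points, and every ball of radius `ρ` containing `N`, every point of `N`
is within distance `2√2·ρ` of `K` (competitive ratio at most `2√2`). -/
theorem move_to_intersection_competitive
    (S : Finset (EuclideanSpace ℝ (Fin 2))) (F : ℕ)
    (hF : F < ⌈(S.card : ℚ) / 2⌉₊) :
    ∃ K : EuclideanSpace ℝ (Fin 2),
      ∀ N : Finset (EuclideanSpace ℝ (Fin 2)), N ⊆ S → (S \ N).card ≤ F →
        ∀ (c : EuclideanSpace ℝ (Fin 2)) (ρ : ℝ),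
          (∀ p ∈ N, dist p c ≤ ρ) → ∀ p ∈ N, dist p K ≤ 2 * Real.sqrt 2 * ρ := by
  set n := S.card with hn
  set m := ⌈(n : ℚ) / 2⌉₊ with hm
  have hm1 : 1 ≤ m := Nat.one_le_iff_ne_zero.mpr (by omega)
  have hmn : m ≤ n := Nat.ceil_le.mpr (by
    rw [div_le_iff₀ (by norm_num)]
    nlinarith [Nat.cast_nonneg (α := ℚ) n])
  have h2m : 2 * m ≤ n + 1 := by
    have h1 : (m : ℚ) < n / 2 + 1 := Nat.ceil_lt_add_one (by positivity)
    have h2 : (2 * m : ℚ) < n + 2 := by linarith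
    have h3 : (2 * m : ℕ) < n + 2 := by exact_mod_cast h2
    omega
  have hmed : ∀ i : Fin 2, ∃ t : ℝ, m ≤ (S.filter (fun p => p i ≤ t)).card ∧
      m ≤ (S.filter (fun p => t ≤ p i)).card :=
    fun i => exists_median S (fun p => p i) m hm1 hmn h2m
  choose t ht1 ht2 using hmed
  refine ⟨WithLp.toLp 2 (t : Fin 2 → ℝ), ?_⟩
  intro N hNS hcard c ρ hball p hpN
  have hρ : 0 ≤ ρ := le_trans dist_nonneg (hball p hpN)
  have hkey : ∀ i : Fin 2, |t i - c i| ≤ ρ := by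
    intro i
    have hmeet : ∀ (A : Finset (EuclideanSpace ℝ (Fin 2))), A ⊆ S → m ≤ A.card →
        (A ∩ N).Nonempty := by
      intro A hAS hAm
      rw [Finset.nonempty_iff_ne_empty]
      intro hemp
      have hsub : A ⊆ S \ N := by
        intro x hx
        refine Finset.mem_sdiff.mpr ⟨hAS hx, fun hxN => ?_⟩
        have : x ∈ A ∩ N := Finset.mem_inter.mpr ⟨hx, hxN⟩
        simp [hemp] at this
      have := Finset.card_le_card hsub
      omega
    obtain ⟨q, hq⟩ := hmeet _ (Finset.filter_subset (fun p => p i ≤ t i) S) (ht1 i)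
    obtain ⟨q', hq'⟩ := hmeet _ (Finset.filter_subset (fun p => t i ≤ p i) S) (ht2 i)
    rw [Finset.mem_inter, Finset.mem_filter] at hq hq'
    have hqc : |q i - c i| ≤ ρ := le_trans (coord_dist_le q c i) (hball q hq.2)
    have hq'c : |q' i - c i| ≤ ρ := le_trans (coord_dist_le q' c i) (hball q' hq'.2)
    have h1 : q i ≤ t i := hq.1.2
    have h2 : t i ≤ q' i := hq'.1.2
    rw [abs_le] at hqc hq'c ⊢
    constructor <;> [linarith [hqc.1]; linarith [hq'c.2]]
  have hcoord : ∀ i : Fin 2, |p i - t i| ≤ 2 * ρ := by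
    intro i
    have hpc : |p i - c i| ≤ ρ := le_trans (coord_dist_le p c i) (hball p hpN)
    have := hkey i
    rw [abs_le] at hpc this ⊢
    constructor <;> linarith [hpc.1, hpc.2, this.1, this.2]
  rw [EuclideanSpace.dist_eq]
  have hsum : ∑ i, dist (p i) ((t : Fin 2 → ℝ) i) ^ 2 ≤ 8 * ρ ^ 2 := by
    have hterm : ∀ i : Fin 2, dist (p i) ((t : Fin 2 → ℝ) i) ^ 2 ≤ 4 * ρ ^ 2 := by
      intro i
      have h := hcoord i
      rw [Real.dist_eq]
      nlinarith [abs_nonneg (p i - t i), sq_abs (p i - t i)]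
    calc ∑ i, dist (p i) ((t : Fin 2 → ℝ) i) ^ 2 ≤ ∑ _i : Fin 2, 4 * ρ ^ 2 :=
          Finset.sum_le_sum (fun i _ => hterm i)
      _ = 8 * ρ ^ 2 := by simp [Finset.sum_const]; ring
  calc Real.sqrt (∑ i, dist (p i) ((t : Fin 2 → ℝ) i) ^ 2)
      ≤ Real.sqrt (8 * ρ ^ 2) := Real.sqrt_le_sqrt hsum
    _ = 2 * Real.sqrt 2 * ρ := by
        rw [show (8 : ℝ) * ρ ^ 2 = (2 * Real.sqrt 2 * ρ) ^ 2 by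
          have : Real.sqrt 2 ^ 2 = 2 := Real.sq_sqrt (by norm_num)
          nlinarith]
        exact Real.sqrt_sq (by positivity)
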